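/- Let g be a Lie algebra over a field F of characteristic zero acting faithfully on the category of integrable g-modules (with respect to fixed generating sets E_d of diagonalizable and E_ln of locally nilpotent elements). Let U(g)^* carry the left action (x ▹ h)(y) = h(yx). Then the algebra of matrix coefficients of integrable modules and their full duals equals the maximal integrable g-submodule of U(g)^*: a functional h ∈ U(g)^* is of the form h(x) = φ(x·v) for some integrable g-module V, v ∈ V, φ ∈ V^*, if and only if the cyclic submodule U(g) ▹ h of U(g)^* is integrable. -/

import Mathlib

universe u

/-- The right-regular representation on the dual of the enveloping algebra:
`rightMulDual F g x h = x ▹ h`, where `(x ▹ h)(y) = h(yx)`. -/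
noncomputable def rightMulDual (F : Type u) (g : Type u) [Field F] [LieRing g]
    [LieAlgebra F g] (x : UniversalEnvelopingAlgebra F g) :
    Module.End F (Module.Dual F (UniversalEnvelopingAlgebra F g)) :=
  LinearMap.lcomp F F (LinearMap.mulRight F x)

section helpers

variable {F : Type u} [Field F] {g : Type u} [LieRing g] [LieAlgebra F g]

@[simp] lemma rightMulDual_apply (x : UniversalEnvelopingAlgebra F g)
    (f : Module.Dual F (UniversalEnvelopingAlgebra F g))
    (y : UniversalEnvelopingAlgebra F g) :
    rightMulDual F g x f y = f (y * x) := rfl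

lemma rightMulDual_mul (x y : UniversalEnvelopingAlgebra F g) :
    rightMulDual F g (x * y) = rightMulDual F g x * rightMulDual F g y := by
  ext f z
  simp [mul_assoc]

lemma rightMulDual_one : rightMulDual F g 1 = 1 := by
  ext f z; simp

lemma rightMulDual_pow (x : UniversalEnvelopingAlgebra F g) (k : ℕ) :
    rightMulDual F g (x ^ k) = (rightMulDual F g x) ^ k := by
  induction k with
  | zero => simpa using rightMulDual_one
  | succ k ih => rw [pow_succ, pow_succ, rightMulDual_mul, ih]

end helpers

section restrictLemma

variable {K : Type*} [Field K] {V : Type*} [AddCommGroup V] [Module K V]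

lemma pow_mem_of_invariant (f : Module.End K V) {p : Submodule K V}
    (hp : ∀ x ∈ p, f x ∈ p) {x : V} (hx : x ∈ p) (n : ℕ) : (f ^ n) x ∈ p := by
  induction n with
  | zero => simpa using hx
  | succ n ih => rw [pow_succ', Module.End.mul_apply]; exact hp _ ih

lemma aeval_mem_of_invariant (f : Module.End K V) {p : Submodule K V}
    (hp : ∀ x ∈ p, f x ∈ p) {x : V} (hx : x ∈ p) (q : Polynomial K) :
    Polynomial.aeval f q x ∈ p := by
  induction q using Polynomial.induction_on' with
  | add a b ha hb => rw [map_add, LinearMap.add_apply]; exact p.add_mem ha hb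
  | monomial n a =>
    rw [Polynomial.aeval_monomial, Module.End.mul_apply, Module.algebraMap_end_apply]
    exact p.smul_mem _ (pow_mem_of_invariant f hp hx n)

lemma iSup_eigenspace_restrict_eq_top {ι : Type*} (f : Module.End K V)
    {p : Submodule K V} (hp : ∀ x ∈ p, f x ∈ p) (μ : ι → K)
    (hμ : Function.Injective μ) (hle : p ≤ ⨆ i, f.eigenspace (μ i)) :
    (⨆ i, Module.End.eigenspace (LinearMap.restrict f hp) (μ i)) = ⊤ := by
  classical
  have key : ∀ w ∈ p, w ∈ ⨆ i, p ⊓ f.eigenspace (μ i) := by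
    intro w hw
    obtain ⟨c, hc, hsum⟩ := (Submodule.mem_iSup_iff_exists_finsupp _ _).mp (hle hw)
    have hci : ∀ i, (c i) ∈ p := by
      intro i
      rcases eq_or_ne (c i) 0 with h0 | h0
      · simp [h0]
      set q : Polynomial K := ∏ j ∈ c.support.erase i,
        (Polynomial.X - Polynomial.C (μ j)) with hqdef
      have hq : ∀ j, (Polynomial.aeval f q) (c j) = q.eval (μ j) • (c j) := by
        intro j
        rcases eq_or_ne (c j) 0 with h0' | h0'
        · simp [h0']
        · exact Module.End.aeval_apply_of_hasEigenvector ⟨hc j, h0'⟩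
      have hqj : ∀ j ∈ c.support.erase i, q.eval (μ j) = 0 := by
        intro j hj
        rw [hqdef, Polynomial.eval_prod]
        exact Finset.prod_eq_zero hj (by simp)
      have hw' : (Polynomial.aeval f q) w = q.eval (μ i) • c i := by
        rw [← hsum, Finsupp.sum, map_sum, Finset.sum_congr rfl (fun j _ => hq j),
          Finset.sum_eq_single i (fun j hj hji =>
            by rw [hqj j (Finset.mem_erase.mpr ⟨hji, hj⟩), zero_smul])
            (fun hi => by rw [Finsupp.notMem_support_iff.mp hi, smul_zero])]
      have hne : q.eval (μ i) ≠ 0 := by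
        rw [hqdef, Polynomial.eval_prod]
        refine Finset.prod_ne_zero_iff.mpr fun j hj => ?_
        simp only [Polynomial.eval_sub, Polynomial.eval_X, Polynomial.eval_C]
        exact sub_ne_zero.mpr fun hEq => (Finset.ne_of_mem_erase hj) (hμ hEq).symm
      have hrep : c i = (q.eval (μ i))⁻¹ • (Polynomial.aeval f q) w := by
        rw [hw', smul_smul, inv_mul_cancel₀ hne, one_smul]
      rw [hrep]
      exact p.smul_mem _ (aeval_mem_of_invariant f hp hw q)
    rw [← hsum, Finsupp.sum]
    exact Submodule.sum_mem _ fun j _ =>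
      Submodule.mem_iSup_of_mem j ⟨hci j, hc j⟩
  apply Submodule.map_injective_of_injective p.injective_subtype
  rw [Submodule.map_iSup, Submodule.map_top, Submodule.range_subtype]
  have heq : ∀ i, Submodule.map p.subtype
      (Module.End.eigenspace (LinearMap.restrict f hp) (μ i)) = p ⊓ f.eigenspace (μ i) :=
    fun i => (Submodule.inf_genEigenspace f p hp).symm
  simp_rw [heq]
  exact le_antisymm (iSup_le fun i => inf_le_left) (fun w hw => key w hw)

end restrictLemma

noncomputable def rmdRestrictHom (F : Type u) (g : Type u) [Field F] [LieRing g]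
    [LieAlgebra F g]
    (W : Submodule F (Module.Dual F (UniversalEnvelopingAlgebra F g)))
    (hW : ∀ x : UniversalEnvelopingAlgebra F g, ∀ f ∈ W, rightMulDual F g x f ∈ W) :
    UniversalEnvelopingAlgebra F g →ₐ[F] Module.End F W where
  toFun x := LinearMap.restrict (rightMulDual F g x) (hW x)
  map_one' := LinearMap.ext fun f => Subtype.ext <| by
    rw [LinearMap.restrict_coe_apply, rightMulDual_one]; rfl
  map_mul' x y := LinearMap.ext fun f => Subtype.ext <| by
    simp only [Module.End.mul_apply, LinearMap.restrict_coe_apply, rightMulDual_mul]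
  map_zero' := LinearMap.ext fun f => Subtype.ext <| by
    rw [LinearMap.restrict_coe_apply]
    show rightMulDual F g 0 (f : Module.Dual F (UniversalEnvelopingAlgebra F g)) = 0
    ext z; simp
  map_add' x y := LinearMap.ext fun f => Subtype.ext <| by
    simp only [LinearMap.add_apply, LinearMap.restrict_coe_apply, Submodule.coe_add]
    ext z; simp [mul_add]
  commutes' c := LinearMap.ext fun f => Subtype.ext <| by
    rw [LinearMap.restrict_coe_apply]
    show rightMulDual F g _ (f : Module.Dual F (UniversalEnvelopingAlgebra F g)) = _
    rw [Module.algebraMap_end_apply]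
    ext z
    simp [Algebra.algebraMap_eq_smul_one, mul_smul_comm]

attribute [local instance 100] LieRing.ofAssociativeRing

/-- let `g` act faithfully on the category of integrable `g`-modules
(with respect to `Ed`, `Eln`); a `g`-module is given by a Lie algebra morphism
`ρ : g → End(V)`, and it is integrable when the elements of `Ed` act diagonalizably
with integer eigenvalues and those of `Eln` act locally nilpotently.  Then a linear
functional `h ∈ U(g)^*` is a matrix coefficient `h(x) = φ(x·v)` of an integrable
module (with `v ∈ V`, `φ ∈ V^*`) if and only if the cyclic submodule
`U(g) ▹ h ⊆ U(g)^*` (under `(x ▹ h)(y) = h(yx)`) is integrable, i.e. the matrix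
coefficient algebra equals the integrable part of `U(g)^*`. -/
theorem stmt18 {F : Type u} [Field F] [CharZero F]
    {g : Type u} [LieRing g] [LieAlgebra F g] (Ed Eln : Set g)
    (hfaithful : ∀ z : g, z ≠ 0 →
      ∃ (V : Type u) (_ : AddCommGroup V) (_ : Module F V)
        (ρ : g →ₗ⁅F⁆ Module.End F V),
        (∀ e ∈ Ed, (⨆ n : ℤ, Module.End.eigenspace (ρ e) (n : F)) = ⊤) ∧
        (∀ e ∈ Eln, ∀ v : V, ∃ k : ℕ, ((ρ e) ^ k) v = 0) ∧ ρ z ≠ 0)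
    (h : Module.Dual F (UniversalEnvelopingAlgebra F g)) :
    (∃ (V : Type u) (_ : AddCommGroup V) (_ : Module F V)
        (ρ : g →ₗ⁅F⁆ Module.End F V),
        (∀ e ∈ Ed, (⨆ n : ℤ, Module.End.eigenspace (ρ e) (n : F)) = ⊤) ∧
        (∀ e ∈ Eln, ∀ v : V, ∃ k : ℕ, ((ρ e) ^ k) v = 0) ∧
        ∃ (v : V) (φ : Module.Dual F V),
          ∀ x : UniversalEnvelopingAlgebra F g,
            h x = φ ((UniversalEnvelopingAlgebra.lift F ρ x) v)) ↔
      ((∀ e ∈ Ed,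
          Submodule.span F (Set.range fun x => rightMulDual F g x h) ≤
            ⨆ n : ℤ, Module.End.eigenspace
              (rightMulDual F g (UniversalEnvelopingAlgebra.ι F e)) (n : F)) ∧
        (∀ e ∈ Eln,
          ∀ f ∈ Submodule.span F (Set.range fun x => rightMulDual F g x h),
            ∃ k : ℕ,
              ((rightMulDual F g (UniversalEnvelopingAlgebra.ι F e)) ^ k) f = 0)) := by
  constructor
  · rintro ⟨V, _, _, ρ, hd, hln, v, φ, hmc⟩
    set L := UniversalEnvelopingAlgebra.lift F ρ with hL
    let T : V →ₗ[F] Module.Dual F (UniversalEnvelopingAlgebra F g) :=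
      { toFun := fun w => φ ∘ₗ ((LinearMap.applyₗ w) ∘ₗ L.toLinearMap)
        map_add' := fun w₁ w₂ => by ext y; simp
        map_smul' := fun c w => by ext y; simp }
    have hT : ∀ (w : V) (y : UniversalEnvelopingAlgebra F g), T w y = φ ((L y) w) :=
      fun w y => rfl
    have hTint : ∀ (x : UniversalEnvelopingAlgebra F g) (w : V),
        rightMulDual F g x (T w) = T ((L x) w) := by
      intro x w
      ext y
      rw [rightMulDual_apply, hT, hT, map_mul, Module.End.mul_apply]
    have hhv : h = T v := by ext y; rw [hT]; exact hmc y
    have hrange : Submodule.span F (Set.range fun x => rightMulDual F g x h) ≤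
        LinearMap.range T := by
      rw [Submodule.span_le]
      rintro _ ⟨x, rfl⟩
      exact ⟨(L x) v, by rw [← hTint, ← hhv]⟩
    constructor
    · intro e he
      refine hrange.trans ?_
      rw [LinearMap.range_eq_map, ← hd e he, Submodule.map_iSup]
      refine iSup_mono fun n => ?_
      rintro _ ⟨w, hw, rfl⟩
      rw [SetLike.mem_coe, Module.End.mem_eigenspace_iff] at hw
      rw [Module.End.mem_eigenspace_iff]
      rw [hTint, UniversalEnvelopingAlgebra.lift_ι_apply, hw, map_smul]
    · intro e he f hf
      obtain ⟨w, rfl⟩ := hrange hf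
      obtain ⟨k, hk⟩ := hln e he w
      refine ⟨k, ?_⟩
      have h1 : (L (UniversalEnvelopingAlgebra.ι F e)) ^ k = (ρ e) ^ k := by
        rw [UniversalEnvelopingAlgebra.lift_ι_apply]
      rw [← rightMulDual_pow, hTint, map_pow, h1, hk, map_zero]
  · rintro ⟨hEd, hEln⟩
    set W := Submodule.span F (Set.range fun x => rightMulDual F g x h) with hWdef
    have hWinv : ∀ x : UniversalEnvelopingAlgebra F g, ∀ f ∈ W,
        rightMulDual F g x f ∈ W := by
      intro x f hf
      have hmap : Submodule.map (rightMulDual F g x) W ≤ W := by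
        rw [hWdef, Submodule.map_span, Submodule.span_le]
        rintro _ ⟨_, ⟨y, rfl⟩, rfl⟩
        refine Submodule.subset_span ⟨x * y, ?_⟩
        show rightMulDual F g (x * y) h = rightMulDual F g x (rightMulDual F g y h)
        rw [rightMulDual_mul, Module.End.mul_apply]
      exact hmap ⟨f, hf, rfl⟩
    letI iR := Module.End.instRing (R := F) (N₁ := ↥W)
    letI iLR := LieRing.ofAssociativeRing (A := Module.End F ↥W)
    letI iLA := LieAlgebra.ofAssociativeAlgebra (R := F) (A := Module.End F ↥W)
    set Φ := rmdRestrictHom F g W hWinv with hΦ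
    set ρW : g →ₗ⁅F⁆ Module.End F ↥W :=
      Φ.toLieHom.comp (UniversalEnvelopingAlgebra.ι F) with hρW
    have hlift : UniversalEnvelopingAlgebra.lift F ρW = Φ :=
      ((UniversalEnvelopingAlgebra.lift_unique F ρW Φ).mp (funext fun e => rfl)).symm
    have hρWe : ∀ e : g, ρW e =
        LinearMap.restrict (rightMulDual F g (UniversalEnvelopingAlgebra.ι F e))
          (hWinv _) := fun e => rfl
    refine ⟨W, inferInstance, inferInstance, ρW, ?_, ?_, ?_⟩
    · intro e he
      rw [hρWe]
      exact iSup_eigenspace_restrict_eq_top _ (hWinv _) (fun n : ℤ => (n : F))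
        Int.cast_injective (hEd e he)
    · intro e he w
      obtain ⟨k, hk⟩ := hEln e he (w : Module.Dual F (UniversalEnvelopingAlgebra F g)) w.2
      refine ⟨k, ?_⟩
      apply Subtype.ext
      rw [hρWe, Module.End.pow_restrict, LinearMap.restrict_coe_apply, hk]
      rfl
    · have hhW : h ∈ W := Submodule.subset_span
        ⟨1, show rightMulDual F g 1 h = h by rw [rightMulDual_one, Module.End.one_apply]⟩
      refine ⟨⟨h, hhW⟩,
        (LinearMap.applyₗ (1 : UniversalEnvelopingAlgebra F g)).comp W.subtype, ?_⟩
      intro x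
      rw [hlift]
      show h x = ((Φ x) ⟨h, hhW⟩ : Module.Dual F (UniversalEnvelopingAlgebra F g)) 1
      have : ((Φ x) ⟨h, hhW⟩ : Module.Dual F (UniversalEnvelopingAlgebra F g)) =
          rightMulDual F g x h := rfl
      rw [this, rightMulDual_apply, one_mul]
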